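/- With μ the unique equilibrium state of the continuous potential ψ constructed in the paper (so that P(ψ) = −2μ([β])) and o the all-β fixed point of the shift, for every n ≥ 5 the cylinder W_n of length n containing o satisfies μ([W_n]) / e^{−nP(ψ) + S_nψ(o)} > (e/2)^n. In particular the very weak Gibbs inequality fails at o. -/

import Mathlib

open MeasureTheory Filter Topology
open scoped ENNReal

/-- The odometer map on `X = {0,1}^ℕ` (adding one with carry in binary). -/
def Tod (x : ℕ → Bool) : ℕ → Bool := fun k =>
  if ∀ i < k, x i = true then !(x k) else x k

/-- The inverse of the odometer map (subtracting one with borrow). -/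
def TodInv (x : ℕ → Bool) : ℕ → Bool := fun k =>
  if ∀ i < k, x i = false then !(x k) else x k

/-- The number determined by the first `k` binary digits of `x`. -/
def DN (k : ℕ) (x : ℕ → Bool) : ℕ := ∑ i ∈ Finset.range k, 2 ^ i * (x i).toNat

/-- The cylinder `[0^i]` of sequences starting with `i` zeros. -/
def cyl0 (i : ℕ) : Set (ℕ → Bool) := {x | ∀ j < i, x j = false}

/-- `A = ⋃_{i=5}^∞ ⋃_{j=0}^{i-1} T^j([0^i])`. -/
def Aset : Set (ℕ → Bool) := ⋃ (i : ℕ) (_ : 5 ≤ i) (j : ℕ) (_ : j < i), Tod^[j] '' cyl0 i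

/-- `A_k = ⋃_{i=5}^{k} ⋃_{j=0}^{i-1} T^j([0^i])`. -/
def Ak (k : ℕ) : Set (ℕ → Bool) :=
  ⋃ (i : ℕ) (_ : 5 ≤ i) (_ : i ≤ k) (j : ℕ) (_ : j < i), Tod^[j] '' cyl0 i

/-- `E_k = ⋃_{i=k+1}^∞ ⋃_{j=0}^{i-1} T^j([0^i])`. -/
def Ek (k : ℕ) : Set (ℕ → Bool) :=
  ⋃ (i : ℕ) (_ : k + 1 ≤ i) (j : ℕ) (_ : j < i), Tod^[j] '' cyl0 i

/-- `T^n` for `n : ℤ` (using the inverse odometer for negative `n`). -/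
def zIter (n : ℤ) (x : ℕ → Bool) : ℕ → Bool :=
  if 0 ≤ n then Tod^[n.toNat] x else TodInv^[(-n).toNat] x

/-- The factor map `Φ : X → Z = {α,β}^ℤ`, with `β = true`, `α = false`:
`Φ(x)_n = β` iff `T^n(x) ∈ A`. -/
noncomputable def Phi (x : ℕ → Bool) : ℤ → Bool := fun n =>
  @decide (zIter n x ∈ Aset) (Classical.propDecidable _)

/-- The subshift `Y`, the closure of `Φ(X)` in the full two-sided shift. -/
def Ysub : Set (ℤ → Bool) := closure (Set.range Phi)

/-- The shift map on `Z = {α,β}^ℤ`. -/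
def shiftZ (z : ℤ → Bool) : ℤ → Bool := fun n => z (n + 1)

/-- The cylinder in `Z` given by a word `w` of length `n` placed at positions `0,…,n-1`. -/
def cylZ (n : ℕ) (w : Fin n → Bool) : Set (ℤ → Bool) :=
  {z | ∀ i : Fin n, z ((i : ℕ) : ℤ) = w i}

/-- The potential `ψ_0(z) = −2` if `z_0 = β`, `0` if `z_0 = α`. -/
def psi0 (z : ℤ → Bool) : ℝ := if z 0 = true then -2 else 0

/-- The Birkhoff sum `S_n ψ(z) = Σ_{i<n} ψ(σ^i z)`. -/
def SnZ (n : ℕ) (ψ : (ℤ → Bool) → ℝ) (z : ℤ → Bool) : ℝ :=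
  ∑ i ∈ Finset.range n, ψ (shiftZ^[i] z)

/-- The agreement radius of `z` with `Y`: the largest `n` such that some `y ∈ Y` agrees
with `z` on all coordinates `|i| < n`; thus `dist(z, Y) = 2^{-mrad z}` in the metric
`d(z,z') = 2^{-min{|i| : z_i ≠ z'_i}}`. -/
noncomputable def mrad (z : ℤ → Bool) : ℕ :=
  sSup {n : ℕ | ∃ y ∈ Ysub, ∀ i : ℤ, |i| < (n : ℤ) → y i = z i}

-- `ψ_1(z) = −12/√n` when `dist(z, Y) = 2^{-n}`, and `ψ_1 = 0` on `Y`.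
open Classical in
noncomputable def psi1 (z : ℤ → Bool) : ℝ :=
  if z ∈ Ysub then 0 else -12 / Real.sqrt (mrad z)

/-- The potential `ψ = ψ_0 + ψ_1`. -/
noncomputable def psiZ (z : ℤ → Bool) : ℝ := psi0 z + psi1 z

/-- The topological pressure of a potential on the full shift,
`P(ψ) = lim (1/n) log Σ_{|w|=n} e^{sup_{z ∈ [w]} S_n ψ(z)}`. -/
noncomputable def pressZ (ψ : (ℤ → Bool) → ℝ) : ℝ :=
  Filter.atTop.limsup (fun n : ℕ =>
    (1 / (n : ℝ)) * Real.log (∑ w : Fin n → Bool, Real.exp (sSup (SnZ n ψ '' cylZ n w))))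

open scoped ENNReal

lemma dn_succ (k : ℕ) (x : ℕ → Bool) : DN (k+1) x = DN k x + 2 ^ k * (x k).toNat := by
  simp [DN, Finset.sum_range_succ]

lemma dn_lt (k : ℕ) (x : ℕ → Bool) : DN k x < 2 ^ k := by
  induction k with
  | zero => simp [DN]
  | succ k ih =>
    rw [dn_succ]
    have h2 : (2:ℕ)^(k+1) = 2^k + 2^k := by ring
    cases hx : x k <;> simp [hx] <;> omega

lemma dn_all_true {k : ℕ} {x : ℕ → Bool} (h : ∀ i < k, x i = true) : DN k x = 2 ^ k - 1 := by
  induction k with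
  | zero => simp [DN]
  | succ k ih =>
    have hk := h k (by omega)
    have ih' : DN k x = 2 ^ k - 1 := ih (fun i hi => h i (by omega))
    rw [dn_succ, ih', hk]
    have : (1:ℕ) ≤ 2 ^ k := Nat.one_le_two_pow
    have h2 : (2:ℕ)^(k+1) = 2^k + 2^k := by ring
    simp; omega

lemma dn_eq_max {k : ℕ} {x : ℕ → Bool} (h : DN k x = 2 ^ k - 1) : ∀ i < k, x i = true := by
  induction k with
  | zero => omega
  | succ k ih =>
    rw [dn_succ] at h
    have h1 : DN k x < 2 ^ k := dn_lt k x
    have h3 : (2:ℕ)^(k+1) = 2^k + 2^k := by ring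
    have h4 : (1:ℕ) ≤ 2 ^ k := Nat.one_le_two_pow
    have hxk : x k = true := by cases hx : x k <;> simp [hx] at h ⊢; omega
    rw [hxk] at h; simp at h
    have hdk : DN k x = 2 ^ k - 1 := by omega
    intro i hi
    rcases Nat.lt_succ_iff_lt_or_eq.mp hi with hi | hi
    · exact ih hdk i hi
    · subst hi; exact hxk

lemma dn_eq_zero {k : ℕ} {x : ℕ → Bool} : DN k x = 0 ↔ ∀ i < k, x i = false := by
  constructor
  · intro h i hi
    simp only [DN, Finset.sum_eq_zero_iff, Finset.mem_range] at h
    have := h i hi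
    cases hx : x i with
    | false => rfl
    | true => simp [hx] at this
  · intro h
    apply Finset.sum_eq_zero
    intro i hi
    simp only [Finset.mem_range] at hi
    rw [h i hi]; simp

lemma dn_tod (k : ℕ) (x : ℕ → Bool) : DN k (Tod x) = (DN k x + 1) % 2 ^ k := by
  induction k with
  | zero => simp [DN]
  | succ k ih =>
    have h1 : DN k x < 2 ^ k := dn_lt k x
    have h3 : (2:ℕ)^(k+1) = 2^k + 2^k := by ring
    have h4 : (1:ℕ) ≤ 2 ^ k := Nat.one_le_two_pow
    rw [dn_succ, dn_succ, ih]
    by_cases hc : ∀ i < k, x i = true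
    · have hmax : DN k x = 2 ^ k - 1 := dn_all_true hc
      have htk : Tod x k = !(x k) := by simp only [Tod]; rw [if_pos hc]
      rw [htk, hmax]
      have : (2 ^ k - 1 + 1) % 2 ^ k = 0 := by
        have : 2 ^ k - 1 + 1 = 2 ^ k := by omega
        simp [this]
      rw [this]
      cases hx : x k <;> simp [hx]
      · have e : 2 ^ k - 1 + 1 = 2 ^ k := by omega
        rw [e, Nat.mod_eq_of_lt (by omega)]
      · have e : 2 ^ k - 1 + 2 ^ k + 1 = 2 ^ (k+1) := by omega
        rw [e, Nat.mod_self]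
    · have htk : Tod x k = x k := by simp only [Tod]; rw [if_neg hc]
      have hne : DN k x ≠ 2 ^ k - 1 := fun h => hc (dn_eq_max h)
      have hlt : DN k x + 1 < 2 ^ k := by omega
      rw [htk, Nat.mod_eq_of_lt hlt]
      have hlt2 : DN k x + 1 + 2 ^ k * (x k).toNat < 2 ^ (k+1) := by
        cases hx : x k <;> simp [hx] <;> omega
      rw [Nat.mod_eq_of_lt (by omega : DN k x + 2 ^ k * (x k).toNat + 1 < 2 ^ (k+1))]
      ring

lemma dn_todInv (k : ℕ) (x : ℕ → Bool) :
    DN k (TodInv x) = (DN k x + (2 ^ k - 1)) % 2 ^ k := by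
  induction k with
  | zero => simp [DN]
  | succ k ih =>
    have h1 : DN k x < 2 ^ k := dn_lt k x
    have h3 : (2:ℕ)^(k+1) = 2^k + 2^k := by ring
    have h4 : (1:ℕ) ≤ 2 ^ k := Nat.one_le_two_pow
    rw [dn_succ, dn_succ, ih]
    by_cases hc : ∀ i < k, x i = false
    · have hzero : DN k x = 0 := dn_eq_zero.mpr hc
      have htk : TodInv x k = !(x k) := by simp only [TodInv]; rw [if_pos hc]
      rw [htk, hzero]
      have e1 : (0 + (2 ^ k - 1)) % 2 ^ k = 2 ^ k - 1 := by
        rw [Nat.zero_add]; exact Nat.mod_eq_of_lt (by omega)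
      rw [e1]
      cases hx : x k <;> simp [hx]
      · omega
      · have e : 2 ^ k + (2 ^ (k+1) - 1) = (2 ^ k - 1) + 2 ^ (k+1) := by omega
        rw [e, Nat.add_mod_right, Nat.mod_eq_of_lt (by omega)]
    · have htk : TodInv x k = x k := by simp only [TodInv]; rw [if_neg hc]
      have hne : DN k x ≠ 0 := fun h => hc (dn_eq_zero.mp h)
      have e1 : (DN k x + (2 ^ k - 1)) % 2 ^ k = DN k x - 1 := by
        have : DN k x + (2 ^ k - 1) = (DN k x - 1) + 2 ^ k := by omega
        rw [this, Nat.add_mod_right, Nat.mod_eq_of_lt (by omega)]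
      rw [e1, htk]
      have e2 : DN k x + 2 ^ k * (x k).toNat + (2 ^ (k+1) - 1)
          = (DN k x - 1 + 2 ^ k * (x k).toNat) + 2 ^ (k+1) := by
        cases hx : x k <;> simp [hx] <;> omega
      rw [e2, Nat.add_mod_right, Nat.mod_eq_of_lt]
      cases hx : x k <;> simp [hx] <;> omega

lemma tod_cond_iff (x : ℕ → Bool) (k : ℕ) :
    (∀ i < k, Tod x i = false) ↔ (∀ i < k, x i = true) := by
  constructor
  · intro h
    intro i hi
    induction i using Nat.strong_induction_on with
    | _ i ih =>
      have hc : ∀ j < i, x j = true := fun j hj => ih j hj (lt_trans hj hi)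
      have := h i hi
      simp only [Tod, if_pos hc] at this
      cases hx : x i <;> simp [hx] at this ⊢
  · intro h i hi
    have hc : ∀ j < i, x j = true := fun j hj => h j (lt_trans hj hi)
    simp only [Tod, if_pos hc, h i hi, Bool.not_true]

lemma todInv_cond_iff (x : ℕ → Bool) (k : ℕ) :
    (∀ i < k, TodInv x i = true) ↔ (∀ i < k, x i = false) := by
  constructor
  · intro h
    intro i hi
    induction i using Nat.strong_induction_on with
    | _ i ih =>
      have hc : ∀ j < i, x j = false := fun j hj => ih j hj (lt_trans hj hi)
      have := h i hi
      simp only [TodInv, if_pos hc] at this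
      cases hx : x i <;> simp [hx] at this ⊢
  · intro h i hi
    have hc : ∀ j < i, x j = false := fun j hj => h j (lt_trans hj hi)
    simp only [TodInv, if_pos hc, h i hi, Bool.not_false]

lemma todInv_tod (x : ℕ → Bool) : TodInv (Tod x) = x := by
  funext k
  simp only [TodInv]
  by_cases hc : ∀ i < k, x i = true
  · rw [if_pos ((tod_cond_iff x k).mpr hc)]
    simp only [Tod, if_pos hc, Bool.not_not]
  · rw [if_neg (fun h => hc ((tod_cond_iff x k).mp h))]
    simp only [Tod, if_neg hc]

lemma tod_todInv (x : ℕ → Bool) : Tod (TodInv x) = x := by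
  funext k
  simp only [Tod]
  by_cases hc : ∀ i < k, x i = false
  · rw [if_pos ((todInv_cond_iff x k).mpr hc)]
    simp only [TodInv, if_pos hc, Bool.not_not]
  · rw [if_neg (fun h => hc ((todInv_cond_iff x k).mp h))]
    simp only [TodInv, if_neg hc]

lemma todInv_leftInv : Function.LeftInverse TodInv Tod := todInv_tod
lemma tod_leftInv : Function.LeftInverse Tod TodInv := tod_todInv

lemma todInv_tod_iter (a b : ℕ) (x : ℕ → Bool) (h : a ≤ b) :
    TodInv^[a] (Tod^[b] x) = Tod^[b - a] x := by
  have : Tod^[b] x = Tod^[a] (Tod^[b-a] x) := by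
    rw [← Function.iterate_add_apply]
    congr 1; omega
  rw [this, (todInv_leftInv.iterate a) _]

lemma tod_todInv_iter (a b : ℕ) (x : ℕ → Bool) (h : a ≤ b) :
    Tod^[a] (TodInv^[b] x) = TodInv^[b - a] x := by
  have : TodInv^[b] x = TodInv^[a] (TodInv^[b-a] x) := by
    rw [← Function.iterate_add_apply]
    congr 1; omega
  rw [this, (tod_leftInv.iterate a) _]

lemma dn_tod_iter (k m : ℕ) (x : ℕ → Bool) :
    DN k (Tod^[m] x) = (DN k x + m) % 2 ^ k := by
  induction m with
  | zero => simp [Nat.mod_eq_of_lt (dn_lt k x)]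
  | succ m ih =>
    rw [Function.iterate_succ_apply', dn_tod, ih, Nat.mod_add_mod, Nat.add_assoc]

lemma dn_todInv_iter (k m : ℕ) (x : ℕ → Bool) :
    DN k (TodInv^[m] x) = (DN k x + m * (2 ^ k - 1)) % 2 ^ k := by
  induction m with
  | zero => simp [Nat.mod_eq_of_lt (dn_lt k x)]
  | succ m ih =>
    rw [Function.iterate_succ_apply', dn_todInv, ih, Nat.mod_add_mod]
    congr 1
    ring

def zc (n : ℤ) (k : ℕ) : ℕ := if 0 ≤ n then n.toNat else (-n).toNat * (2 ^ k - 1)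

lemma dn_zIter (n : ℤ) (k : ℕ) (x : ℕ → Bool) :
    DN k (zIter n x) = (DN k x + zc n k) % 2 ^ k := by
  unfold zIter zc
  split
  · exact dn_tod_iter k _ x
  · exact dn_todInv_iter k _ x

lemma zIter_tod_iter (m : ℤ) (i : ℕ) (x : ℕ → Bool) :
    zIter m (Tod^[i] x) = zIter (m + i) x := by
  unfold zIter
  by_cases hm : 0 ≤ m
  · rw [if_pos hm, if_pos (by omega)]
    rw [← Function.iterate_add_apply]
    congr 1
    omega
  · rw [if_neg hm]
    by_cases hmi : 0 ≤ m + i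
    · rw [if_pos hmi]
      rw [todInv_tod_iter _ _ _ (by omega)]
      congr 1
      omega
    · rw [if_neg hmi]
      have h1 : (-m).toNat = ((-(m+i)).toNat) + i := by omega
      rw [h1, Function.iterate_add_apply, (todInv_leftInv.iterate i) _]

lemma dn_inj {k : ℕ} {x y : ℕ → Bool} (h : DN k x = DN k y) : ∀ i < k, x i = y i := by
  induction k with
  | zero => omega
  | succ k ih =>
    rw [dn_succ, dn_succ] at h
    have h1 := dn_lt k x
    have h2 := dn_lt k y
    have hxy : (x k).toNat = (y k).toNat ∧ DN k x = DN k y := by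
      cases hx : x k <;> cases hy : y k <;> rw [hx, hy] at h <;> simp at h ⊢ <;> omega
    intro i hi
    rcases Nat.lt_succ_iff_lt_or_eq.mp hi with hi | hi
    · exact ih hxy.2 i hi
    · subst hi
      have := hxy.1
      cases hx : x i <;> cases hy : y i <;> rw [hx, hy] at this <;> simp at this ⊢

lemma dn_surj {k r : ℕ} (hr : r < 2 ^ k) : ∃ y : ℕ → Bool, DN k y = r := by
  induction k generalizing r with
  | zero => exact ⟨fun _ => false, by simp [DN]; omega⟩
  | succ k ih =>
    by_cases h : 2 ^ k ≤ r
    · obtain ⟨y', hy'⟩ := ih (r := r - 2 ^ k) (by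
        have : (2:ℕ)^(k+1) = 2^k + 2^k := by ring
        omega)
      refine ⟨fun i => if i = k then true else y' i, ?_⟩
      rw [dn_succ]
      have : DN k (fun i => if i = k then true else y' i) = DN k y' := by
        apply Finset.sum_congr rfl
        intro i hi
        simp only [Finset.mem_range] at hi
        simp [Nat.ne_of_lt hi]
      rw [this, hy']
      simp; omega
    · obtain ⟨y', hy'⟩ := ih (r := r) (by omega)
      refine ⟨fun i => if i = k then false else y' i, ?_⟩
      rw [dn_succ]
      have : DN k (fun i => if i = k then false else y' i) = DN k y' := by
        apply Finset.sum_congr rfl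
        intro i hi
        simp only [Finset.mem_range] at hi
        simp [Nat.ne_of_lt hi]
      rw [this, hy']
      simp

lemma mem_cyl0_iff {k : ℕ} {x : ℕ → Bool} : x ∈ cyl0 k ↔ DN k x = 0 := by
  rw [dn_eq_zero]; rfl

lemma mem_image_iff {k j : ℕ} (hj : j < 2 ^ k) (z : ℕ → Bool) :
    z ∈ Tod^[j] '' cyl0 k ↔ DN k z = j := by
  constructor
  · rintro ⟨y, hy, rfl⟩
    rw [dn_tod_iter, mem_cyl0_iff.mp hy, Nat.zero_add, Nat.mod_eq_of_lt hj]
  · intro h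
    refine ⟨TodInv^[j] z, ?_, ?_⟩
    · rw [mem_cyl0_iff, dn_todInv_iter, h]
      have : j + j * (2 ^ k - 1) = j * 2 ^ k := by
        obtain ⟨M', hM'⟩ : ∃ M', 2 ^ k = M' + 1 := ⟨2 ^ k - 1, by have : (1:ℕ) ≤ 2 ^ k := Nat.one_le_two_pow; omega⟩
        rw [hM']; simp [Nat.add_sub_cancel]; ring
      rw [this, Nat.mul_mod_left]
    · have : Tod^[j] (TodInv^[j] z) = TodInv^[j - j] z := tod_todInv_iter j j z le_rfl
      simpa using this

def rres (c j M : ℕ) : ℕ := (j + (M - c % M)) % M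

lemma rres_spec {M c j : ℕ} (hM : 0 < M) (hj : j < M) (a : ℕ) (ha : a < M) :
    (a + c) % M = j ↔ a = rres c j M := by
  have hd : c % M < M := Nat.mod_lt _ hM
  have hkey : (rres c j M + c) % M = j := by
    unfold rres
    rw [Nat.mod_add_mod]
    set d := c % M with hdd
    set t := M * (c / M) with htt
    have hc : d + t = c := Nat.mod_add_div c M
    have e : j + (M - d) + c = (j + t) + M := by omega
    rw [e, Nat.add_mod_right, htt, Nat.add_mul_mod_self_left, Nat.mod_eq_of_lt hj]
  constructor
  · intro h
    have h2 : (a + c) % M = (rres c j M + c) % M := by rw [h, hkey]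
    have h3 : a ≡ rres c j M [MOD M] := Nat.ModEq.add_right_cancel' c h2
    have h4 : rres c j M < M := Nat.mod_lt _ hM
    calc a = a % M := (Nat.mod_eq_of_lt ha).symm
    _ = rres c j M % M := h3
    _ = rres c j M := Nat.mod_eq_of_lt h4
  · intro h; rw [h, hkey]

noncomputable def gR (k : ℕ) : ℝ := if 5 ≤ k then (k : ℝ) * (1/2)^k else 0

lemma gR_nonneg (k : ℕ) : 0 ≤ gR k := by
  unfold gR; split <;> positivity

lemma gR_le (k : ℕ) : gR k ≤ (k : ℝ) * (1/2)^k := by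
  unfold gR; split
  · exact le_rfl
  · positivity

lemma summable_kgeo : Summable (fun n : ℕ => (n:ℝ) * (1/2)^n) := by
  have := summable_pow_mul_geometric_of_norm_lt_one (R := ℝ) (r := 1/2) 1 (by norm_num)
  simpa using this

lemma gR_summable : Summable gR :=
  Summable.of_nonneg_of_le gR_nonneg (fun k => by
    have h1 : (0:ℝ) ≤ (k : ℝ) * (1/2)^k := by positivity
    unfold gR; split
    · exact le_rfl
    · exact h1) summable_kgeo

lemma gR_tsum : ∑' k, gR k = 3/8 := by
  have h5 := Summable.sum_add_tsum_nat_add (f := gR) 5 gR_summable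
  have hz : ∑ i ∈ Finset.range 5, gR i = 0 := by
    have : ∀ i < 5, gR i = 0 := by
      intro i hi; unfold gR; rw [if_neg (by omega)]
    rw [Finset.sum_eq_zero (fun i hi => this i (Finset.mem_range.mp hi))]
  have he : ∀ m : ℕ, gR (m + 5) = (1/32) * ((m:ℝ) * (1/2)^m) + (5/32) * (1/2)^m := by
    intro m
    unfold gR
    rw [if_pos (by omega)]
    push_cast
    ring
  have hsum1 : ∑' m : ℕ, ((1:ℝ)/32) * ((m:ℝ) * (1/2)^m) = (1/32) * 2 := by
    rw [tsum_mul_left, tsum_coe_mul_geometric_of_norm_lt_one (by norm_num : ‖(1:ℝ)/2‖ < 1)]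
    norm_num
  have hsum2 : ∑' m : ℕ, ((5:ℝ)/32) * ((1:ℝ)/2)^m = (5/32) * 2 := by
    rw [tsum_mul_left, tsum_geometric_of_lt_one (by norm_num) (by norm_num)]
    norm_num
  have htail : ∑' m : ℕ, gR (m + 5) = 3/8 := by
    calc ∑' m : ℕ, gR (m + 5)
        = ∑' m : ℕ, (((1:ℝ)/32) * ((m:ℝ) * (1/2)^m) + ((5:ℝ)/32) * ((1:ℝ)/2)^m) := by
          exact tsum_congr he
      _ = (1/32) * 2 + (5/32) * 2 := by
          rw [Summable.tsum_add (by apply Summable.mul_left; exact summable_kgeo)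
            (by apply Summable.mul_left; exact summable_geometric_of_lt_one (by norm_num) (by norm_num)),
            hsum1, hsum2]
      _ = 3/8 := by norm_num
  rw [← h5, hz, htail]
  norm_num

lemma rres_lt {c j M : ℕ} (hM : 0 < M) : rres c j M < M := Nat.mod_lt _ hM

lemma cyl_measurable (k : ℕ) (y : ℕ → Bool) :
    MeasurableSet {x : ℕ → Bool | ∀ i < k, x i = y i} := by
  have h : {x : ℕ → Bool | ∀ i < k, x i = y i}
      = ⋂ (i : ℕ) (_ : i < k), (fun x : ℕ → Bool => x i) ⁻¹' {y i} := by
    ext x; simp [Set.mem_iInter]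
  rw [h]
  exact MeasurableSet.iInter fun i => MeasurableSet.iInter fun _ =>
    measurable_pi_apply i (measurableSet_singleton (y i))

lemma dn_set_eq {k r : ℕ} (hr : r < 2 ^ k) :
    ∃ y : ℕ → Bool, {x : ℕ → Bool | DN k x = r} = {x | ∀ i < k, x i = y i} := by
  obtain ⟨y, hy⟩ := dn_surj hr
  refine ⟨y, ?_⟩
  ext x
  simp only [Set.mem_setOf_eq]
  constructor
  · intro h; exact dn_inj (by rw [h, hy]) 
  · intro h
    rw [← hy]
    apply Finset.sum_congr rfl
    intro i hi
    rw [h i (Finset.mem_range.mp hi)]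

lemma dn_set_measurable {k r : ℕ} (hr : r < 2 ^ k) :
    MeasurableSet {x : ℕ → Bool | DN k x = r} := by
  obtain ⟨y, hy⟩ := dn_set_eq hr
  rw [hy]; exact cyl_measurable k y

lemma nu_dn_set {ν : Measure (ℕ → Bool)}
    (hν : ∀ (n : ℕ) (a : ℕ → Bool), ν {x | ∀ i < n, x i = a i} = (2 : ℝ≥0∞)⁻¹ ^ n)
    {k r : ℕ} (hr : r < 2 ^ k) : ν {x : ℕ → Bool | DN k x = r} = (2 : ℝ≥0∞)⁻¹ ^ k := by
  obtain ⟨y, hy⟩ := dn_set_eq hr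
  rw [hy, hν k y]

lemma piece_iff (m : ℤ) {k j : ℕ} (hj : j < 2 ^ k) (x : ℕ → Bool) :
    zIter m x ∈ Tod^[j] '' cyl0 k ↔ DN k x = rres (zc m k) j (2 ^ k) := by
  rw [mem_image_iff hj, dn_zIter]
  exact rres_spec (by positivity) hj (DN k x) (dn_lt k x)

lemma pre_eq (m : ℤ) : {x : ℕ → Bool | zIter m x ∈ Aset} =
    ⋃ k, ⋃ (_ : 5 ≤ k), ⋃ j, ⋃ (_ : j < k), {x : ℕ → Bool | DN k x = rres (zc m k) j (2 ^ k)} := by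
  ext x
  simp only [Aset, Set.mem_iUnion, Set.mem_setOf_eq]
  constructor
  · rintro ⟨k, hk, j, hj, hmem⟩
    exact ⟨k, hk, j, hj, (piece_iff m (lt_trans hj (Nat.lt_two_pow_self (n := k))) x).mp hmem⟩
  · rintro ⟨k, hk, j, hj, hmem⟩
    exact ⟨k, hk, j, hj, (piece_iff m (lt_trans hj (Nat.lt_two_pow_self (n := k))) x).mpr hmem⟩

lemma pre_measurable (m : ℤ) : MeasurableSet {x : ℕ → Bool | zIter m x ∈ Aset} := by
  rw [pre_eq]
  refine MeasurableSet.iUnion (fun k => MeasurableSet.iUnion (fun _ =>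
    MeasurableSet.iUnion (fun j => MeasurableSet.iUnion (fun _ => ?_))))
  exact dn_set_measurable (rres_lt (by positivity))

lemma nu_pre_le {ν : Measure (ℕ → Bool)}
    (hν : ∀ (n : ℕ) (a : ℕ → Bool), ν {x | ∀ i < n, x i = a i} = (2 : ℝ≥0∞)⁻¹ ^ n)
    (m : ℤ) : ν {x : ℕ → Bool | zIter m x ∈ Aset} ≤ ENNReal.ofReal (3/8) := by
  rw [pre_eq]
  calc ν (⋃ k, ⋃ (_ : 5 ≤ k), ⋃ j, ⋃ (_ : j < k), {x : ℕ → Bool | DN k x = rres (zc m k) j (2 ^ k)})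
      ≤ ∑' k, ν (⋃ (_ : 5 ≤ k), ⋃ j, ⋃ (_ : j < k), {x : ℕ → Bool | DN k x = rres (zc m k) j (2 ^ k)}) :=
        measure_iUnion_le _
    _ ≤ ∑' k, ENNReal.ofReal (gR k) := by
        apply ENNReal.tsum_le_tsum
        intro k
        by_cases hk : 5 ≤ k
        · refine le_trans (measure_mono (Set.iUnion_subset (fun _ => Set.Subset.rfl))) ?_
          have hgk : ENNReal.ofReal (gR k) = (k : ℝ≥0∞) * (2:ℝ≥0∞)⁻¹ ^ k := by
            unfold gR
            rw [if_pos hk, ENNReal.ofReal_mul (by positivity), ENNReal.ofReal_pow (by norm_num),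
              ENNReal.ofReal_natCast]
            congr 1
            rw [show (1:ℝ)/2 = (2:ℝ)⁻¹ by norm_num]
            rw [ENNReal.ofReal_inv_of_pos (by norm_num : (0:ℝ) < 2)]
            congr 1
            simp
          rw [hgk]
          have hset : (⋃ j, ⋃ (_ : j < k), {x : ℕ → Bool | DN k x = rres (zc m k) j (2 ^ k)})
              = ⋃ j ∈ Finset.range k, {x : ℕ → Bool | DN k x = rres (zc m k) j (2 ^ k)} := by
            simp [Finset.mem_range]
          rw [hset]
          calc ν (⋃ j ∈ Finset.range k, {x : ℕ → Bool | DN k x = rres (zc m k) j (2 ^ k)})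
              ≤ ∑ j ∈ Finset.range k, ν {x : ℕ → Bool | DN k x = rres (zc m k) j (2 ^ k)} :=
                measure_biUnion_finset_le _ _
            _ = ∑ _j ∈ Finset.range k, (2:ℝ≥0∞)⁻¹ ^ k := by
                apply Finset.sum_congr rfl
                intro j _
                exact nu_dn_set hν (rres_lt (by positivity))
            _ = (k : ℝ≥0∞) * (2:ℝ≥0∞)⁻¹ ^ k := by
                rw [Finset.sum_const, Finset.card_range, nsmul_eq_mul]
        · have : (⋃ (_ : 5 ≤ k), ⋃ j, ⋃ (_ : j < k),
              {x : ℕ → Bool | DN k x = rres (zc m k) j (2 ^ k)}) ⊆ (∅ : Set (ℕ → Bool)) :=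
            Set.iUnion_subset (fun h => absurd h hk)
          refine le_trans (measure_mono this) ?_
          simp
    _ = ENNReal.ofReal (∑' k, gR k) := (ENNReal.ofReal_tsum_of_nonneg gR_nonneg gR_summable).symm
    _ = ENNReal.ofReal (3/8) := by rw [gR_tsum]

lemma phi_true_iff (x : ℕ → Bool) (n : ℤ) : Phi x n = true ↔ zIter n x ∈ Aset := by
  simp only [Phi]
  exact @decide_eq_true_iff _ (Classical.propDecidable _)

lemma measurable_Phi : Measurable Phi := by
  apply measurable_pi_lambda
  intro n
  apply measurable_to_countable'
  intro y
  cases y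
  · have h : (fun x => Phi x n) ⁻¹' {false} = {x : ℕ → Bool | zIter n x ∈ Aset}ᶜ := by
      ext x
      simp only [Set.mem_preimage, Set.mem_singleton_iff, Set.mem_compl_iff, Set.mem_setOf_eq,
        ← phi_true_iff x n]
      cases h : Phi x n <;> simp
    rw [h]
    exact (pre_measurable n).compl
  · have h : (fun x => Phi x n) ⁻¹' {true} = {x : ℕ → Bool | zIter n x ∈ Aset} := by
      ext x
      simp only [Set.mem_preimage, Set.mem_singleton_iff, Set.mem_setOf_eq, ← phi_true_iff x n]
    rw [h]
    exact pre_measurable n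

lemma zIter_zero (x : ℕ → Bool) : zIter 0 x = x := by simp [zIter]

lemma shiftZ_iter (i : ℕ) (z : ℤ → Bool) (m : ℤ) : shiftZ^[i] z m = z (m + i) := by
  induction i generalizing m with
  | zero => simp
  | succ i ih =>
    rw [Function.iterate_succ_apply', shiftZ, ih]
    congr 1
    push_cast
    ring

lemma phi_shift (x : ℕ → Bool) (i : ℕ) : shiftZ^[i] (Phi x) = Phi (Tod^[i] x) := by
  funext m
  rw [shiftZ_iter]
  simp only [Phi]
  rw [zIter_tod_iter]

lemma mem_Aset {k j : ℕ} (hk : 5 ≤ k) (hj : j < k) {x : ℕ → Bool} (hx : x ∈ cyl0 k) :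
    Tod^[j] x ∈ Aset := by
  simp only [Aset, Set.mem_iUnion]
  exact ⟨k, hk, j, hj, ⟨x, hx, rfl⟩⟩

lemma zero_mem_cyl0 (k : ℕ) : (fun _ => false) ∈ cyl0 k := fun _ _ => rfl

lemma zIter_natCast (i : ℕ) (x : ℕ → Bool) : zIter (i : ℤ) x = Tod^[i] x := by
  unfold zIter
  rw [if_pos (by positivity)]
  norm_num

lemma o_mem_Ysub : (fun _ : ℤ => true) ∈ Ysub := by
  unfold Ysub
  apply mem_closure_of_tendsto (f := fun N : ℕ => Phi (Tod^[N] (fun _ => false)))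
    (b := atTop)
  · rw [tendsto_pi_nhds]
    intro i
    apply tendsto_atTop_of_eventually_const (i₀ := i.natAbs + 1)
    intro N hN
    rw [phi_true_iff, zIter_tod_iter]
    have h0 : (0:ℤ) ≤ i + N := by omega
    have : zIter (i + N) (fun _ => false) = Tod^[(i + N).toNat] (fun _ => false) := by
      unfold zIter; rw [if_pos h0]
    rw [this]
    exact mem_Aset (k := (i + N).toNat + 5) (by omega) (by omega) (zero_mem_cyl0 _)
  · exact Filter.Eventually.of_forall (fun N => Set.mem_range_self _)

lemma psi1_nonpos (z : ℤ → Bool) : psi1 z ≤ 0 := by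
  unfold psi1
  split
  · exact le_rfl
  · exact div_nonpos_of_nonpos_of_nonneg (by norm_num) (Real.sqrt_nonneg _)

lemma psiZ_nonpos (z : ℤ → Bool) : psiZ z ≤ 0 := by
  unfold psiZ psi0
  have := psi1_nonpos z
  split <;> linarith

lemma snZ_nonpos (n : ℕ) (z : ℤ → Bool) : SnZ n psiZ z ≤ 0 :=
  Finset.sum_nonpos (fun i _ => psiZ_nonpos _)

lemma psi1_of_mem {z : ℤ → Bool} (h : z ∈ Ysub) : psi1 z = 0 := by
  unfold psi1; rw [if_pos h]

lemma shiftZ_fixed (i : ℕ) : shiftZ^[i] (fun _ : ℤ => true) = (fun _ : ℤ => true) :=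
  Function.iterate_fixed rfl i

lemma snZ_o (n : ℕ) : SnZ n psiZ (fun _ : ℤ => true) = -2 * n := by
  unfold SnZ
  have h1 : ∀ i ∈ Finset.range n, psiZ (shiftZ^[i] (fun _ : ℤ => true)) = -2 := by
    intro i _
    rw [shiftZ_fixed]
    unfold psiZ
    rw [psi1_of_mem o_mem_Ysub]
    unfold psi0
    norm_num
  rw [Finset.sum_congr rfl h1, Finset.sum_const, Finset.card_range, nsmul_eq_mul]
  ring

lemma snZ_phi (n : ℕ) (x : ℕ → Bool) :
    SnZ n psiZ (Phi x) = ∑ i ∈ Finset.range n, (if Phi x (i : ℤ) = true then (-2 : ℝ) else 0) := by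
  unfold SnZ
  apply Finset.sum_congr rfl
  intro i _
  rw [phi_shift]
  unfold psiZ
  rw [psi1_of_mem (subset_closure (Set.mem_range_self _))]
  unfold psi0
  have : Phi (Tod^[i] x) 0 = Phi x (i : ℤ) := by
    have := phi_shift x i
    have h2 := congrFun this 0
    rw [shiftZ_iter] at h2
    rw [← h2, Int.zero_add]
  rw [this]
  ring

lemma nu_univ {ν : Measure (ℕ → Bool)}
    (hν : ∀ (n : ℕ) (a : ℕ → Bool), ν {x | ∀ i < n, x i = a i} = (2 : ℝ≥0∞)⁻¹ ^ n) :
    ν Set.univ = 1 := by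
  have := hν 0 (fun _ => false)
  simpa using this

open Classical in
lemma exists_good {ν : Measure (ℕ → Bool)}
    (hν : ∀ (n : ℕ) (a : ℕ → Bool), ν {x | ∀ i < n, x i = a i} = (2 : ℝ≥0∞)⁻¹ ^ n)
    (n : ℕ) :
    ∃ x : ℕ → Bool,
      (((Finset.range n).filter (fun i : ℕ => Phi x (i : ℤ) = true)).card : ℝ) ≤ 3/8 * n := by
  by_contra hcon
  push_neg at hcon
  set t : ℕ := ⌊(3:ℝ)/8 * n⌋₊ + 1 with ht
  have hcard : ∀ x : ℕ → Bool,
      t ≤ ((Finset.range n).filter (fun i : ℕ => Phi x (i : ℤ) = true)).card := by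
    intro x
    exact (Nat.floor_lt (by positivity : (0:ℝ) ≤ (3:ℝ)/8 * n)).mpr (hcon x)
  -- integrate
  set F : ℕ → (ℕ → Bool) → ℝ≥0∞ :=
    fun i x => ({x : ℕ → Bool | zIter (i : ℤ) x ∈ Aset}).indicator 1 x with hF
  have hFmeas : ∀ i, Measurable (F i) :=
    fun i => (measurable_const (a := (1:ℝ≥0∞))).indicator (pre_measurable (i : ℤ))
  have hptwise : ∀ x : ℕ → Bool, (t : ℝ≥0∞) ≤ ∑ i ∈ Finset.range n, F i x := by
    intro x
    have hc : ((Finset.range n).filter (fun i : ℕ => Phi x (i : ℤ) = true)).card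
        = ∑ i ∈ Finset.range n, (if Phi x (i : ℤ) = true then 1 else 0) :=
      Finset.card_filter _ _
    have h2 : ∀ i ∈ Finset.range n,
        ((if Phi x (i : ℤ) = true then (1:ℝ≥0∞) else 0)) = F i x := by
      intro i _
      rw [hF]
      simp only [Set.indicator_apply, Set.mem_setOf_eq, Pi.one_apply, ← phi_true_iff x (i:ℤ)]
    calc (t : ℝ≥0∞) ≤ (((Finset.range n).filter (fun i : ℕ => Phi x (i : ℤ) = true)).card : ℝ≥0∞) := by
          exact_mod_cast Nat.cast_le.mpr (hcard x)
      _ = ∑ i ∈ Finset.range n, (if Phi x (i : ℤ) = true then (1:ℝ≥0∞) else 0) := by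
          rw [hc]; push_cast; apply Finset.sum_congr rfl; intro i _; split <;> simp
      _ = ∑ i ∈ Finset.range n, F i x := Finset.sum_congr rfl h2
  have hint : (t : ℝ≥0∞) ≤ (n : ℝ≥0∞) * ENNReal.ofReal (3/8) := by
    calc (t : ℝ≥0∞) = ∫⁻ _x, (t : ℝ≥0∞) ∂ν := by
          rw [lintegral_const, nu_univ hν, mul_one]
      _ ≤ ∫⁻ x, ∑ i ∈ Finset.range n, F i x ∂ν := lintegral_mono hptwise
      _ = ∑ i ∈ Finset.range n, ∫⁻ x, F i x ∂ν :=
          lintegral_finset_sum _ (fun i _ => hFmeas i)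
      _ = ∑ i ∈ Finset.range n, ν {x : ℕ → Bool | zIter (i : ℤ) x ∈ Aset} := by
          apply Finset.sum_congr rfl
          intro i _
          rw [hF]
          exact lintegral_indicator_one (pre_measurable (i : ℤ))
      _ ≤ ∑ _i ∈ Finset.range n, ENNReal.ofReal (3/8) :=
          Finset.sum_le_sum (fun i _ => nu_pre_le hν (i : ℤ))
      _ = (n : ℝ≥0∞) * ENNReal.ofReal (3/8) := by
          rw [Finset.sum_const, Finset.card_range, nsmul_eq_mul]
  have hreal : (t : ℝ) ≤ (3:ℝ)/8 * n := by
    have h1 : ((t : ℝ≥0∞)) ≤ ENNReal.ofReal ((3:ℝ)/8 * n) := by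
      rw [ENNReal.ofReal_mul (by norm_num), mul_comm, ENNReal.ofReal_natCast n]
      exact hint
    rw [show ((t : ℝ≥0∞)) = ENNReal.ofReal (t : ℝ) by rw [ENNReal.ofReal_natCast]] at h1
    exact (ENNReal.ofReal_le_ofReal_iff (by positivity)).mp h1
  have h2 : (3:ℝ)/8 * n < t := by
    rw [ht]; push_cast; exact Nat.lt_floor_add_one _
  linarith

lemma sum_exp_pos (n : ℕ) :
    0 < ∑ w : Fin n → Bool, Real.exp (sSup (SnZ n psiZ '' cylZ n w)) :=
  Finset.sum_pos (fun w _ => Real.exp_pos _) ⟨default, Finset.mem_univ _⟩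

lemma u_le (n : ℕ) :
    (1 / (n : ℝ)) * Real.log (∑ w : Fin n → Bool, Real.exp (sSup (SnZ n psiZ '' cylZ n w)))
      ≤ Real.log 2 := by
  rcases Nat.eq_zero_or_pos n with hn | hn
  · subst hn
    simp
    exact Real.log_nonneg one_le_two
  · have hsum : ∑ w : Fin n → Bool, Real.exp (sSup (SnZ n psiZ '' cylZ n w)) ≤ (2:ℝ)^n := by
      have hle : ∀ w : Fin n → Bool, w ∈ Finset.univ →
          Real.exp (sSup (SnZ n psiZ '' cylZ n w)) ≤ 1 := by
        intro w _
        rw [Real.exp_le_one_iff]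
        apply Real.sSup_le _ le_rfl
        rintro v ⟨z, _, rfl⟩
        exact snZ_nonpos n z
      calc ∑ w : Fin n → Bool, Real.exp (sSup (SnZ n psiZ '' cylZ n w))
          ≤ (Finset.univ : Finset (Fin n → Bool)).card • (1:ℝ) :=
            Finset.sum_le_card_nsmul _ _ _ hle
        _ = (2:ℝ)^n := by
            rw [Finset.card_univ, nsmul_eq_mul, mul_one]
            simp
    have hlog : Real.log (∑ w : Fin n → Bool, Real.exp (sSup (SnZ n psiZ '' cylZ n w)))
        ≤ (n : ℝ) * Real.log 2 := by
      calc Real.log (∑ w : Fin n → Bool, Real.exp (sSup (SnZ n psiZ '' cylZ n w)))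
          ≤ Real.log ((2:ℝ)^n) := Real.log_le_log (sum_exp_pos n) hsum
        _ = (n : ℝ) * Real.log 2 := by rw [Real.log_pow]
    have hn' : (0:ℝ) < n := by exact_mod_cast hn
    calc (1 / (n : ℝ)) * Real.log (∑ w : Fin n → Bool, Real.exp (sSup (SnZ n psiZ '' cylZ n w)))
        ≤ (1 / (n : ℝ)) * ((n : ℝ) * Real.log 2) :=
          mul_le_mul_of_nonneg_left hlog (by positivity)
      _ = Real.log 2 := by field_simp

lemma u_ge {ν : Measure (ℕ → Bool)}
    (hν : ∀ (n : ℕ) (a : ℕ → Bool), ν {x | ∀ i < n, x i = a i} = (2 : ℝ≥0∞)⁻¹ ^ n)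
    (n : ℕ) (hn : 1 ≤ n) :
    -(3:ℝ)/4 ≤ (1 / (n : ℝ)) *
      Real.log (∑ w : Fin n → Bool, Real.exp (sSup (SnZ n psiZ '' cylZ n w))) := by
  classical
  obtain ⟨x, hx⟩ := exists_good hν n
  set w : Fin n → Bool := fun i => Phi x ((i : ℕ) : ℤ) with hw
  have hmem : Phi x ∈ cylZ n w := fun i => rfl
  have hbdd : BddAbove (SnZ n psiZ '' cylZ n w) := by
    refine ⟨0, ?_⟩
    rintro v ⟨z, _, rfl⟩
    exact snZ_nonpos n z
  have h1 : SnZ n psiZ (Phi x) ≤ sSup (SnZ n psiZ '' cylZ n w) :=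
    le_csSup hbdd ⟨Phi x, hmem, rfl⟩
  have h2 : -(3:ℝ)/4 * n ≤ SnZ n psiZ (Phi x) := by
    rw [snZ_phi]
    have e1 : ∑ i ∈ Finset.range n, (if Phi x (i : ℤ) = true then (-2:ℝ) else 0)
        = (((Finset.range n).filter (fun i : ℕ => Phi x (i : ℤ) = true)).card : ℝ) * (-2) := by
      rw [← Finset.sum_filter, Finset.sum_const, nsmul_eq_mul]
    rw [e1]
    nlinarith [hx]
  have h3 : Real.exp (-(3:ℝ)/4 * n)
      ≤ ∑ w' : Fin n → Bool, Real.exp (sSup (SnZ n psiZ '' cylZ n w')) := by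
    calc Real.exp (-(3:ℝ)/4 * n) ≤ Real.exp (sSup (SnZ n psiZ '' cylZ n w)) :=
          Real.exp_le_exp.mpr (h2.trans h1)
      _ ≤ ∑ w' : Fin n → Bool, Real.exp (sSup (SnZ n psiZ '' cylZ n w')) :=
          Finset.single_le_sum (f := fun w' : Fin n → Bool => Real.exp (sSup (SnZ n psiZ '' cylZ n w'))) (fun w' _ => (Real.exp_pos _).le) (Finset.mem_univ w)
  have h4 : -(3:ℝ)/4 * n
      ≤ Real.log (∑ w' : Fin n → Bool, Real.exp (sSup (SnZ n psiZ '' cylZ n w'))) :=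
    (Real.le_log_iff_exp_le (sum_exp_pos n)).mpr h3
  have hn' : (0:ℝ) < n := by exact_mod_cast hn
  calc -(3:ℝ)/4 = (1 / (n : ℝ)) * (-(3:ℝ)/4 * n) := by field_simp
    _ ≤ (1 / (n : ℝ)) *
        Real.log (∑ w' : Fin n → Bool, Real.exp (sSup (SnZ n psiZ '' cylZ n w'))) :=
      mul_le_mul_of_nonneg_left h4 (by positivity)

lemma press_lb {ν : Measure (ℕ → Bool)}
    (hν : ∀ (n : ℕ) (a : ℕ → Bool), ν {x | ∀ i < n, x i = a i} = (2 : ℝ≥0∞)⁻¹ ^ n) :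
    -(3:ℝ)/4 ≤ pressZ psiZ := by
  unfold pressZ
  apply Filter.le_limsup_of_frequently_le
  · apply Filter.Eventually.frequently
    filter_upwards [Filter.eventually_ge_atTop 1] with n hn
    exact u_ge hν n hn
  · exact Filter.isBoundedUnder_of ⟨Real.log 2, fun n => u_le n⟩

lemma cylZ_measurable (n : ℕ) (w : Fin n → Bool) : MeasurableSet (cylZ n w) := by
  have h : cylZ n w = ⋂ (i : Fin n), (fun z : ℤ → Bool => z ((i : ℕ) : ℤ)) ⁻¹' {w i} := by
    ext z; simp [cylZ, Set.mem_iInter]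
  rw [h]
  exact MeasurableSet.iInter fun i => measurable_pi_apply _ (measurableSet_singleton _)


/-- for the constructed potential `ψ` with unique equilibrium state
`μ = Φ_*ν`, the point `o` of all `β`'s and every `n ≥ 5`,
`μ([W_n]) / e^{−nP(ψ) + S_nψ(o)} > (e/2)^n`: the very weak Gibbs inequality fails at `o`. -/
theorem stmt18 (ν : Measure (ℕ → Bool))
    (hν : ∀ (n : ℕ) (a : ℕ → Bool), ν {x | ∀ i < n, x i = a i} = (2 : ℝ≥0∞)⁻¹ ^ n)
    (μ : Measure (ℤ → Bool)) (hμ : μ = Measure.map Phi ν) :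
    ∀ n : ℕ, 5 ≤ n →
      (Real.exp 1 / 2) ^ n <
        (μ (cylZ n fun _ => true)).toReal /
          Real.exp (-(n : ℝ) * pressZ psiZ + SnZ n psiZ fun _ => true) := by
  intro n hn
  have hP : -(3:ℝ)/4 ≤ pressZ psiZ := press_lb hν
  have hS : SnZ n psiZ (fun _ : ℤ => true) = -2 * n := snZ_o n
  have hWmeas : MeasurableSet (cylZ n (fun _ => true)) := cylZ_measurable n _
  have hμW : (2:ℝ≥0∞)⁻¹ ^ n ≤ μ (cylZ n fun _ => true) := by
    rw [hμ, Measure.map_apply measurable_Phi hWmeas]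
    have hsub : cyl0 n ⊆ Phi ⁻¹' cylZ n (fun _ => true) := by
      intro x hx i
      rw [phi_true_iff, zIter_natCast]
      exact mem_Aset hn i.isLt hx
    have hc : ν (cyl0 n) = (2:ℝ≥0∞)⁻¹ ^ n := hν n (fun _ => false)
    calc (2:ℝ≥0∞)⁻¹ ^ n = ν (cyl0 n) := hc.symm
      _ ≤ ν (Phi ⁻¹' cylZ n (fun _ => true)) := measure_mono hsub
  have hμ1 : μ (cylZ n fun _ => true) ≤ 1 := by
    rw [hμ]
    calc Measure.map Phi ν (cylZ n fun _ => true)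
        ≤ Measure.map Phi ν Set.univ := measure_mono (Set.subset_univ _)
      _ = ν (Phi ⁻¹' Set.univ) := Measure.map_apply measurable_Phi MeasurableSet.univ
      _ = 1 := by rw [Set.preimage_univ, nu_univ hν]
  have hT : ((2:ℝ)⁻¹) ^ n ≤ (μ (cylZ n fun _ => true)).toReal := by
    have h := ENNReal.toReal_mono (ne_of_lt (lt_of_le_of_lt hμ1 ENNReal.one_lt_top)) hμW
    have he : (((2:ℝ≥0∞)⁻¹ ^ n)).toReal = ((2:ℝ)⁻¹) ^ n := by
      rw [ENNReal.toReal_pow, ENNReal.toReal_inv]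
      norm_num
    rwa [he] at h
  rw [hS, lt_div_iff₀ (Real.exp_pos _)]
  have hn' : (0:ℝ) < n := by
    have : 0 < n := by omega
    exact_mod_cast this
  have key : (Real.exp 1 / 2) ^ n * Real.exp (-(n:ℝ) * pressZ psiZ + -2 * n)
      = ((2:ℝ)⁻¹) ^ n * Real.exp (-(n:ℝ) * (pressZ psiZ + 1)) := by
    rw [div_eq_mul_inv, mul_pow, ← Real.exp_nat_mul,
      mul_comm (Real.exp ((n:ℝ) * 1)) (((2:ℝ)⁻¹) ^ n), mul_assoc, ← Real.exp_add]
    congr 1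
    ring
  rw [key]
  have hexp : Real.exp (-(n:ℝ) * (pressZ psiZ + 1)) < 1 := by
    rw [Real.exp_lt_one_iff]
    have hpos : 0 < (n:ℝ) * (pressZ psiZ + 1) := by nlinarith
    linarith
  calc ((2:ℝ)⁻¹) ^ n * Real.exp (-(n:ℝ) * (pressZ psiZ + 1))
      < ((2:ℝ)⁻¹) ^ n * 1 := by
        apply mul_lt_mul_of_pos_left hexp (by positivity)
    _ = ((2:ℝ)⁻¹) ^ n := mul_one _
    _ ≤ (μ (cylZ n fun _ => true)).toReal := hT
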